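/- Let p ≥ 5 be a prime, let r with 1 ≤ r ≤ p−1 be a quadratic nonresidue modulo p, and set R = r if r is odd and R = p + r if r is even. Then for all integers n ≥ 0 and k ≥ 0, the number of overpartition (2k+1)-tuples with odd parts satisfies OPT_{2k+1}(2pn + R) ≡ 0 (mod 4). -/
import Mathlib


/-- An overpartition with odd parts, encoded as a pair of multisets of odd
(hence positive) integers: the overlined parts (which are distinct, since the
last occurrence of each part size may be overlined) and the non-overlined
parts. -/
def IsOddOverpartition (p : Multiset ℕ × Multiset ℕ) : Prop :=
  p.1.Nodup ∧ (∀ x ∈ p.1, Odd x) ∧ (∀ x ∈ p.2, Odd x)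

/-- `OPT k n` is the number of overpartition `k`-tuples of `n` with odd parts,
with generating function `∏_{i≥1} ((1+q^{2i-1})/(1-q^{2i-1}))^k`. -/
noncomputable def OPT (k n : ℕ) : ℕ :=
  Set.ncard {f : Fin k → Multiset ℕ × Multiset ℕ |
    (∀ i, IsOddOverpartition (f i)) ∧ (∑ i, ((f i).1.sum + (f i).2.sum)) = n}

namespace OPTProof

abbrev P := Multiset ℕ × Multiset ℕ

def wt (p : P) : ℕ := p.1.sum + p.2.sum

def OSet (k n : ℕ) : Set (Fin k → P) :=
  {f | (∀ i, IsOddOverpartition (f i)) ∧ (∑ i, wt (f i)) = n}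

lemma OPT_eq (k n : ℕ) : OPT k n = Nat.card (OSet k n) := by
  rw [Nat.card_coe_set_eq]
  rfl

/-! ### Finiteness -/

def MSet (n : ℕ) : Set (Multiset ℕ) := {s | (∀ x ∈ s, Odd x) ∧ s.sum ≤ n}

lemma finite_MSet (n : ℕ) : (MSet n).Finite := by
  apply (Set.finite_Iic ((n + 1) • (Multiset.range (n + 1)))).subset
  intro s hs
  rw [Set.mem_Iic, Multiset.le_iff_count]
  intro a
  by_cases ha : a ∈ s
  · have h1 : a < n + 1 :=
      Nat.lt_succ_of_le ((Multiset.single_le_sum (fun x _ => Nat.zero_le x) a ha).trans hs.2)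
    have hcard : s.card ≤ s.sum := by
      calc s.card = s.card • 1 := by simp
      _ ≤ s.sum := Multiset.card_nsmul_le_sum fun x hx => (hs.1 x hx).pos
    have h2 : Multiset.count a s ≤ n + 1 :=
      le_trans (Multiset.count_le_card a s) (le_trans hcard (Nat.le_succ_of_le hs.2))
    rw [Multiset.count_nsmul]
    have : Multiset.count a (Multiset.range (n + 1)) = 1 :=
      Multiset.count_eq_one_of_mem (Multiset.nodup_range _) (Multiset.mem_range.2 h1)
    rw [this]
    omega
  · simp [Multiset.count_eq_zero_of_notMem ha]

def SSet (n : ℕ) : Set P := {p | IsOddOverpartition p ∧ wt p ≤ n}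

lemma finite_SSet (n : ℕ) : (SSet n).Finite := by
  apply ((finite_MSet n).prod (finite_MSet n)).subset
  rintro ⟨s, t⟩ ⟨⟨_, hs, ht⟩, hw⟩
  have hw' : s.sum + t.sum ≤ n := hw
  exact ⟨⟨hs, le_trans (Nat.le_add_right _ _) hw'⟩, ⟨ht, le_trans (Nat.le_add_left _ _) hw'⟩⟩

lemma finite_OSet (k n : ℕ) : Finite (OSet k n) := by
  haveI : Finite (SSet n) := (finite_SSet n).to_subtype
  have key : ∀ f : OSet k n, ∀ i, f.1 i ∈ SSet n := by
    rintro ⟨f, hf⟩ i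
    refine ⟨hf.1 i, ?_⟩
    calc wt (f i) ≤ ∑ j, wt (f j) :=
          Finset.single_le_sum (f := fun j => wt (f j)) (fun j _ => Nat.zero_le _)
            (Finset.mem_univ i)
    _ = n := hf.2
  have hinj : Function.Injective (fun f : OSet k n => fun i => (⟨f.1 i, key f i⟩ : SSet n)) := by
    intro f g hfg
    apply Subtype.ext; funext i
    exact congrArg Subtype.val (congrFun hfg i)
  exact Finite.of_injective _ hinj

lemma natCard_sigma {ι : Type} [Fintype ι] (f : ι → Type) [∀ i, Finite (f i)] :
    Nat.card (Σ i, f i) = ∑ i, Nat.card (f i) := by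
  letI := fun i => Fintype.ofFinite (f i)
  rw [Nat.card_eq_fintype_card, Fintype.card_sigma]
  exact Finset.sum_congr rfl fun i _ => (Nat.card_eq_fintype_card).symm

/-! ### Convolution -/

def convEquiv (k j n : ℕ) :
    ↥(OSet (k + j) n) ≃ Σ a : Fin (n + 1), ↥((OSet k a.1) ×ˢ (OSet j (n - a.1))) where
  toFun f :=
    have hsplit : (∑ i : Fin k, wt (f.1 (Fin.castAdd j i)))
        + (∑ i : Fin j, wt (f.1 (Fin.natAdd k i))) = n := by
      rw [← Fin.sum_univ_add (fun i : Fin (k + j) => wt (f.1 i))]; exact f.2.2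
    ⟨⟨∑ i : Fin k, wt (f.1 (Fin.castAdd j i)), by omega⟩,
      ⟨(fun i => f.1 (Fin.castAdd j i), fun i => f.1 (Fin.natAdd k i)),
        ⟨⟨fun i => f.2.1 _, rfl⟩, ⟨fun i => f.2.1 _, by simp only; omega⟩⟩⟩⟩
  invFun x :=
    ⟨Fin.append x.2.1.1 x.2.1.2, by
      obtain ⟨⟨a, ha⟩, ⟨⟨g, h⟩, ⟨hg, hh⟩⟩⟩ := x
      refine ⟨fun i => ?_, ?_⟩
      · refine Fin.addCases (fun i => ?_) (fun i => ?_) i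
        · rw [Fin.append_left]; exact hg.1 i
        · rw [Fin.append_right]; exact hh.1 i
      · rw [Fin.sum_univ_add (fun i : Fin (k + j) => wt (Fin.append g h i))]
        simp only [Fin.append_left, Fin.append_right]
        rw [hg.2, hh.2]
        simp only at ha ⊢
        omega⟩
  left_inv f := by
    apply Subtype.ext
    funext i
    refine Fin.addCases (fun i => ?_) (fun i => ?_) i
    · exact Fin.append_left _ _ i
    · exact Fin.append_right _ _ i
  right_inv x := by
    obtain ⟨⟨a, ha⟩, ⟨⟨g, h⟩, hgh⟩⟩ := x
    have h1 : (∑ i : Fin k, wt ((Fin.append g h) (Fin.castAdd j i))) = a := by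
      have : ∀ i : Fin k, wt (Fin.append g h (Fin.castAdd j i)) = wt (g i) := by
        intro i; rw [Fin.append_left]
      rw [Finset.sum_congr rfl fun i _ => this i]
      exact hgh.1.2
    subst h1
    refine Sigma.ext rfl ?_
    apply heq_of_eq
    apply Subtype.ext
    refine Prod.ext ?_ ?_ <;> funext i
    · exact Fin.append_left _ _ i
    · exact Fin.append_right _ _ i

lemma OPT_add (k j n : ℕ) :
    OPT (k + j) n = ∑ a ∈ Finset.range (n + 1), OPT k a * OPT j (n - a) := by
  haveI : ∀ a : Fin (n + 1), Finite ↥(OSet k a.1 ×ˢ OSet j (n - a.1)) := fun a => by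
    haveI := finite_OSet k a.1
    haveI := finite_OSet j (n - a.1)
    exact ((Set.toFinite _).prod (Set.toFinite _)).to_subtype
  rw [OPT_eq, Nat.card_congr (convEquiv k j n),
    natCard_sigma (fun a : Fin (n+1) => ↥(OSet k a.1 ×ˢ OSet j (n - a.1)))]
  rw [Fin.sum_univ_eq_sum_range (fun a => Nat.card ↥(OSet k a ×ˢ OSet j (n - a))) (n+1)]
  refine Finset.sum_congr rfl fun a _ => ?_
  rw [Nat.card_congr (Equiv.Set.prod _ _), Nat.card_prod, OPT_eq, OPT_eq]

/-! ### OPT at 0 -/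

lemma OPT_zero (k : ℕ) : OPT k 0 = 1 := by
  rw [OPT_eq]
  have hset : OSet k 0 = {fun _ => (0, 0)} := by
    ext f
    constructor
    · rintro ⟨hv, hs⟩
      simp only [Set.mem_singleton_iff]
      funext i
      have h0 : wt (f i) = 0 := by
        have := (Finset.sum_eq_zero_iff (s := Finset.univ)
          (f := fun i => wt (f i))).1 hs i (Finset.mem_univ i)
        exact this
      have h0' : (f i).1.sum + (f i).2.sum = 0 := h0
      have h1 : (f i).1 = 0 := by
        by_contra hne
        obtain ⟨x, hx⟩ := Multiset.exists_mem_of_ne_zero hne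
        have hp := ((hv i).2.1 x hx).pos
        have hle := Multiset.single_le_sum (fun y _ => Nat.zero_le y) x hx
        omega
      have h2 : (f i).2 = 0 := by
        by_contra hne
        obtain ⟨x, hx⟩ := Multiset.exists_mem_of_ne_zero hne
        have hp := ((hv i).2.2 x hx).pos
        have hle := Multiset.single_le_sum (fun y _ => Nat.zero_le y) x hx
        omega
      exact Prod.ext h1 h2
    · intro hf
      rw [Set.mem_singleton_iff] at hf
      subst hf
      exact ⟨fun i => ⟨Multiset.nodup_zero, by simp, by simp⟩, by simp [wt]⟩
  rw [hset, Nat.card_coe_set_eq, Set.ncard_singleton]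

/-! ### Structure of single overpartitions -/

def Single (n : ℕ) : Set P := {p | IsOddOverpartition p ∧ wt p = n}

def oneEquiv (n : ℕ) : ↥(OSet 1 n) ≃ ↥(Single n) where
  toFun f := ⟨f.1 0, f.2.1 0, by
    have h := f.2.2
    rwa [Fin.sum_univ_one] at h⟩
  invFun p := ⟨fun _ => p.1, fun _ => p.2.1, by rw [Fin.sum_univ_one]; exact p.2.2⟩
  left_inv f := by
    apply Subtype.ext; funext i
    rw [Subsingleton.elim i 0]
  right_inv p := rfl

lemma toFinset_val_eq {s : Multiset ℕ} (h : s.Nodup) : s.toFinset.val = s := by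
  rw [Multiset.toFinset_val, Multiset.dedup_eq_self.mpr h]

def partEquiv (n : ℕ) :
    ↥(Single n) ≃ Σ π : {π : n.Partition // ∀ s ∈ π.parts, Odd s},
      {S : Finset ℕ // S.val ≤ π.1.parts} where
  toFun p :=
    ⟨⟨⟨p.1.1 + p.1.2,
        fun hi => by
          rcases Multiset.mem_add.1 hi with h | h
          · exact (p.2.1.2.1 _ h).pos
          · exact (p.2.1.2.2 _ h).pos,
        by rw [Multiset.sum_add]; exact p.2.2⟩,
       fun s hs => by
          rcases Multiset.mem_add.1 hs with h | h
          · exact p.2.1.2.1 _ h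
          · exact p.2.1.2.2 _ h⟩,
     ⟨p.1.1.toFinset, by
        rw [toFinset_val_eq p.2.1.1]; exact Multiset.le_add_right _ _⟩⟩
  invFun x :=
    ⟨(x.2.1.val, x.1.1.parts - x.2.1.val),
     ⟨⟨x.2.1.nodup, fun s hs => x.1.2 s (Multiset.mem_of_le x.2.2 hs),
        fun s hs => x.1.2 s (Multiset.mem_of_le (tsub_le_self) hs)⟩,
      by
        show x.2.1.val.sum + (x.1.1.parts - x.2.1.val).sum = n
        rw [← Multiset.sum_add, add_tsub_cancel_of_le x.2.2]
        exact x.1.1.parts_sum⟩⟩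
  left_inv p := by
    apply Subtype.ext
    have h1 : p.1.1.toFinset.val = p.1.1 := toFinset_val_eq p.2.1.1
    refine Prod.ext h1 ?_
    show (p.1.1 + p.1.2) - p.1.1.toFinset.val = p.1.2
    rw [h1]
    exact add_tsub_cancel_left _ _
  right_inv x := by
    obtain ⟨⟨π, hπ⟩, ⟨S, hS⟩⟩ := x
    have hparts : S.val + (π.parts - S.val) = π.parts := add_tsub_cancel_of_le hS
    refine Sigma.ext ?_ ?_
    · apply Subtype.ext; apply Nat.Partition.ext; exact hparts
    · rw [Subtype.heq_iff_coe_eq ?_]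
      · exact Finset.val_toFinset S
      · intro T
        show T.val ≤ S.val + (π.parts - S.val) ↔ T.val ≤ π.parts
        rw [hparts]

def subEquiv (m : Multiset ℕ) :
    {S : Finset ℕ // S.val ≤ m} ≃ {S : Finset ℕ // S ∈ m.toFinset.powerset} := by
  apply Equiv.subtypeEquivRight
  intro S
  rw [Finset.mem_powerset]
  constructor
  · intro h a ha
    exact Multiset.mem_toFinset.2 (Multiset.mem_of_le h ha)
  · intro h
    rw [Multiset.le_iff_count]
    intro a
    by_cases ha : a ∈ S
    · calc Multiset.count a S.val = 1 :=
        Multiset.count_eq_one_of_mem S.nodup ha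
      _ ≤ Multiset.count a m :=
        Multiset.one_le_count_iff_mem.2 (Multiset.mem_toFinset.1 (h ha))
    · rw [Multiset.count_eq_zero_of_notMem (by simpa using ha)]
      exact Nat.zero_le _

lemma card_subsets (m : Multiset ℕ) :
    Nat.card {S : Finset ℕ // S.val ≤ m} = 2 ^ m.toFinset.card := by
  rw [Nat.card_congr (subEquiv m), Nat.card_eq_finsetCard, Finset.card_powerset]

lemma OPT_one (n : ℕ) :
    OPT 1 n = ∑ π : {π : n.Partition // ∀ s ∈ π.parts, Odd s},
      2 ^ (π.1.parts.toFinset.card) := by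
  haveI : ∀ π : {π : n.Partition // ∀ s ∈ π.parts, Odd s},
      Finite {S : Finset ℕ // S.val ≤ π.1.parts} :=
    fun π => Finite.of_equiv _ (subEquiv π.1.parts).symm
  rw [OPT_eq, Nat.card_congr ((oneEquiv n).trans (partEquiv n)),
    natCard_sigma (fun π : {π : n.Partition // ∀ s ∈ π.parts, Odd s} =>
      {S : Finset ℕ // S.val ≤ π.1.parts})]
  exact Finset.sum_congr rfl fun π _ => card_subsets _

lemma parts_toFinset_nonempty {n : ℕ} (hn : 1 ≤ n)
    (π : {π : n.Partition // ∀ s ∈ π.parts, Odd s}) : π.1.parts.toFinset.Nonempty := by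
  have hne : π.1.parts ≠ 0 := by
    intro h
    have hs := π.1.parts_sum
    rw [h] at hs
    simp at hs
    omega
  obtain ⟨x, hx⟩ := Multiset.exists_mem_of_ne_zero hne
  exact ⟨x, Multiset.mem_toFinset.2 hx⟩

lemma OPT_one_even {n : ℕ} (hn : 1 ≤ n) : 2 ∣ OPT 1 n := by
  rw [OPT_one]
  apply Finset.dvd_sum
  intro π _
  exact dvd_pow_self 2 (Nat.pos_iff_ne_zero.mp (parts_toFinset_nonempty hn π).card_pos)

lemma odd_of_dvd {d N : ℕ} (h : d ∣ N) (hN : Odd N) : Odd d := by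
  obtain ⟨c, rfl⟩ := h
  exact (Nat.odd_mul.1 hN).1

def divPart (N d : ℕ) (hdvd : d ∣ N) (hodd : Odd d) :
    {π : N.Partition // ∀ s ∈ π.parts, Odd s} :=
  ⟨⟨Multiset.replicate (N / d) d,
    fun hi => by rw [Multiset.eq_of_mem_replicate hi]; exact hodd.pos,
    by rw [Multiset.sum_replicate, smul_eq_mul, Nat.div_mul_cancel hdvd]⟩,
   fun s hs => by rw [Multiset.eq_of_mem_replicate hs]; exact hodd⟩

lemma card_filter_one {N : ℕ} (hN : Odd N) :
    (Finset.univ.filter fun π : {π : N.Partition // ∀ s ∈ π.parts, Odd s} =>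
      π.1.parts.toFinset.card = 1).card = N.divisors.card := by
  symm
  refine Finset.card_bij
    (fun d hd => divPart N d (Nat.mem_divisors.1 hd).1
      (odd_of_dvd (Nat.mem_divisors.1 hd).1 hN)) ?_ ?_ ?_
  · intro d hd
    obtain ⟨hdvd, hN0⟩ := Nat.mem_divisors.1 hd
    have hdpos : 0 < d := Nat.pos_of_dvd_of_pos hdvd (Nat.pos_of_ne_zero hN0)
    have hq : 0 < N / d := Nat.div_pos (Nat.le_of_dvd (Nat.pos_of_ne_zero hN0) hdvd) hdpos
    rw [Finset.mem_filter]
    refine ⟨Finset.mem_univ _, ?_⟩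
    show (Multiset.replicate (N / d) d).toFinset.card = 1
    rw [Multiset.toFinset_replicate]
    simp [Nat.pos_iff_ne_zero.1 hq]
  · intro d₁ hd₁ d₂ hd₂ h
    have h1 : 0 < N / d₁ := by
      obtain ⟨hdvd, hN0⟩ := Nat.mem_divisors.1 hd₁
      exact Nat.div_pos (Nat.le_of_dvd (Nat.pos_of_ne_zero hN0) hdvd)
        (Nat.pos_of_dvd_of_pos hdvd (Nat.pos_of_ne_zero hN0))
    have hmem : d₁ ∈ Multiset.replicate (N / d₁) d₁ :=
      Multiset.mem_replicate.2 ⟨Nat.pos_iff_ne_zero.1 h1, rfl⟩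
    have hmem2 : d₁ ∈ Multiset.replicate (N / d₂) d₂ := by
      have hp : Multiset.replicate (N / d₁) d₁ = Multiset.replicate (N / d₂) d₂ :=
        congrArg (fun π => π.1.parts) h
      rw [← hp]
      exact hmem
    exact Multiset.eq_of_mem_replicate hmem2
  · intro π hπ
    have hcard := (Finset.mem_filter.1 hπ).2
    obtain ⟨a, ha⟩ := Finset.card_eq_one.1 hcard
    have hmem : ∀ b ∈ π.1.parts, b = a := by
      intro b hb
      have : b ∈ π.1.parts.toFinset := Multiset.mem_toFinset.2 hb
      rw [ha] at this
      exact Finset.mem_singleton.1 this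
    have hrep : π.1.parts = Multiset.replicate π.1.parts.card a :=
      Multiset.eq_replicate_card.2 hmem
    have hain : a ∈ π.1.parts := by
      have : a ∈ π.1.parts.toFinset := by rw [ha]; exact Finset.mem_singleton_self a
      exact Multiset.mem_toFinset.1 this
    have hsum : π.1.parts.card * a = N := by
      have := π.1.parts_sum
      rw [hrep] at this
      rwa [Multiset.sum_replicate, smul_eq_mul] at this
    have hdvd : a ∣ N := hsum ▸ dvd_mul_left a π.1.parts.card
    have hN0 : N ≠ 0 := by
      rintro rfl
      exact absurd hN (by decide)
    refine ⟨a, Nat.mem_divisors.2 ⟨hdvd, hN0⟩, ?_⟩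
    apply Subtype.ext
    apply Nat.Partition.ext
    show Multiset.replicate (N / a) a = π.1.parts
    have hapos : 0 < a := π.1.parts_pos hain
    have hdiv : N / a = π.1.parts.card :=
      Nat.div_eq_of_eq_mul_left hapos hsum.symm
    rw [hdiv, ← hrep]

lemma even_divisors_card {N : ℕ} (hsq : ¬∃ m : ℕ, m * m = N) (hN0 : N ≠ 0) :
    2 ∣ N.divisors.card := by
  have key : ((N.divisors.card : ℕ) : ZMod 2) = 0 := by
    have h1 : ((N.divisors.card : ℕ) : ZMod 2) = ∑ _d ∈ N.divisors, (1 : ZMod 2) := by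
      simp
    rw [h1]
    refine Finset.sum_involution (fun d _ => N / d) (fun a ha => by decide) ?_ ?_ ?_
    · intro a ha _ he
      have he' : N / a = a := he
      obtain ⟨hdvd, -⟩ := Nat.mem_divisors.1 ha
      refine hsq ⟨a, ?_⟩
      rw [← Nat.mul_div_cancel' hdvd, he']
    · intro a ha
      obtain ⟨hdvd, -⟩ := Nat.mem_divisors.1 ha
      exact Nat.mem_divisors.2 ⟨Nat.div_dvd_of_dvd hdvd, hN0⟩
    · intro a ha
      exact Nat.div_div_self (Nat.mem_divisors.1 ha).1 hN0
  rwa [ZMod.natCast_eq_zero_iff] at key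

lemma OPT_one_mod4 {N : ℕ} (hN : Odd N) (hsq : ¬∃ m : ℕ, m * m = N) :
    (OPT 1 N : ZMod 4) = 0 := by
  have h1 : 1 ≤ N := hN.pos
  rw [OPT_one]
  push_cast
  rw [← Finset.sum_filter_add_sum_filter_not Finset.univ
    (fun π : {π : N.Partition // ∀ s ∈ π.parts, Odd s} => π.1.parts.toFinset.card = 1)]
  have h2 : ∀ π ∈ Finset.univ.filter
      (fun π : {π : N.Partition // ∀ s ∈ π.parts, Odd s} =>
        ¬π.1.parts.toFinset.card = 1),
      ((2 : ZMod 4) ^ π.1.parts.toFinset.card) = 0 := by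
    intro π hπ
    have hne : π.1.parts.toFinset.card ≠ 1 := (Finset.mem_filter.1 hπ).2
    have hpos : 0 < π.1.parts.toFinset.card := (parts_toFinset_nonempty h1 π).card_pos
    obtain ⟨t, ht⟩ : ∃ t, π.1.parts.toFinset.card = t + 2 :=
      ⟨π.1.parts.toFinset.card - 2, by omega⟩
    rw [ht, pow_add]
    have : (2 : ZMod 4) ^ 2 = 0 := by decide
    rw [this, mul_zero]
  rw [Finset.sum_congr rfl h2, Finset.sum_const_zero, add_zero]
  rw [Finset.sum_congr rfl
    (fun π hπ => by rw [(Finset.mem_filter.1 hπ).2, pow_one])]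
  rw [Finset.sum_const, card_filter_one hN]
  obtain ⟨c, hc⟩ := even_divisors_card hsq (by omega)
  rw [hc, mul_comm 2 c, mul_smul]
  have : (2 : ℕ) • (2 : ZMod 4) = 0 := by decide
  rw [this, smul_zero]

lemma OPT_two_mod4 {n : ℕ} (hn : 1 ≤ n) : (4 : ℕ) ∣ OPT 2 n := by
  have h : OPT 2 n = ∑ a ∈ Finset.range (n + 1), OPT 1 a * OPT 1 (n - a) := OPT_add 1 1 n
  obtain ⟨c, hc⟩ := OPT_one_even hn
  have h0 : (0 : ℕ) ∈ Finset.range (n + 1) := Finset.mem_range.2 (by omega)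
  have hnmem : n ∈ (Finset.range (n + 1)).erase 0 :=
    Finset.mem_erase.2 ⟨by omega, Finset.mem_range.2 (by omega)⟩
  rw [h, ← Finset.add_sum_erase _ _ h0, ← Finset.add_sum_erase _ _ hnmem]
  have hterm0 : OPT 1 0 * OPT 1 (n - 0) = 2 * c := by
    rw [OPT_zero, one_mul, Nat.sub_zero, hc]
  have htermn : OPT 1 n * OPT 1 (n - n) = 2 * c := by
    rw [Nat.sub_self, OPT_zero, mul_one, hc]
  rw [hterm0, htermn, ← add_assoc]
  refine dvd_add ⟨c, by ring⟩ (Finset.dvd_sum ?_)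
  intro a ha
  obtain ⟨han, ha'⟩ := Finset.mem_erase.1 ha
  obtain ⟨ha0, ha''⟩ := Finset.mem_erase.1 ha'
  have halt : a < n + 1 := Finset.mem_range.1 ha''
  have h4 : (4 : ℕ) = 2 * 2 := rfl
  rw [h4]
  exact mul_dvd_mul (OPT_one_even (by omega)) (OPT_one_even (by omega))

lemma OPT_odd_mod4 (k n : ℕ) : (OPT (2 * k + 1) n : ZMod 4) = (OPT 1 n : ZMod 4) := by
  induction k with
  | zero => rfl
  | succ k ih =>
    have h : OPT (2 * (k + 1) + 1) n
        = ∑ a ∈ Finset.range (n + 1), OPT (2 * k + 1) a * OPT 2 (n - a) := by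
      rw [show 2 * (k + 1) + 1 = (2 * k + 1) + 2 by ring, OPT_add]
    rw [h]
    push_cast
    rw [Finset.sum_eq_single_of_mem n (Finset.self_mem_range_succ n)]
    · rw [Nat.sub_self, OPT_zero, Nat.cast_one, mul_one]
      exact ih
    · intro b hb hbn
      have hblt : b < n + 1 := Finset.mem_range.1 hb
      have : (OPT 2 (n - b) : ZMod 4) = 0 := by
        rw [ZMod.natCast_eq_zero_iff]
        exact OPT_two_mod4 (by omega)
      rw [this, mul_zero]

end OPTProof

/-- For a prime `p ≥ 5`, a quadratic nonresidue `r` modulo `p` with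
`1 ≤ r ≤ p - 1`, and `R = r` if `r` is odd, `R = p + r` if `r` is even,
we have `OPT_{2k+1}(2pn + R) ≡ 0 (mod 4)` for all `n, k ≥ 0`. -/
theorem opt_odd_tuple_nonresidue_mod_four (p : ℕ) (hp : p.Prime) (hp5 : 5 ≤ p)
    (r : ℕ) (hr1 : 1 ≤ r) (hr2 : r ≤ p - 1)
    (hnr : ¬ ∃ x : ℤ, x ^ 2 ≡ (r : ℤ) [ZMOD p])
    (R : ℕ) (hR : R = if Odd r then r else p + r)
    (n k : ℕ) :
    OPT (2 * k + 1) (2 * p * n + R) ≡ 0 [MOD 4] := by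
  have hp2 : p ≠ 2 := by omega
  have hpodd : Odd p := hp.odd_of_ne_two hp2
  have hRodd : Odd R := by
    by_cases hr : Odd r
    · rw [hR, if_pos hr]; exact hr
    · rw [hR, if_neg hr]
      exact hpodd.add_even (Nat.not_odd_iff_even.1 hr)
  have hNodd : Odd (2 * p * n + R) := by
    have he : Even (2 * p * n) := ⟨p * n, by ring⟩
    exact he.add_odd hRodd
  have hsq : ¬∃ m : ℕ, m * m = 2 * p * n + R := by
    rintro ⟨m, hm⟩
    apply hnr
    refine ⟨(m : ℤ), ?_⟩
    have hmN : ((m : ℤ)) ^ 2 = ((2 * p * n + R : ℕ) : ℤ) := by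
      push_cast [← hm]; ring
    rw [hmN]
    have hdvd : (p : ℤ) ∣ (r : ℤ) - ((2 * p * n + R : ℕ) : ℤ) := by
      by_cases hr : Odd r
      · refine ⟨-(2 * n), ?_⟩
        rw [hR, if_pos hr]
        push_cast
        ring
      · refine ⟨-(2 * n + 1), ?_⟩
        rw [hR, if_neg hr]
        push_cast
        ring
    exact Int.modEq_iff_dvd.2 hdvd
  have hfin : ((OPT (2 * k + 1) (2 * p * n + R) : ℕ) : ZMod 4) = 0 := by
    rw [OPTProof.OPT_odd_mod4]
    exact OPTProof.OPT_one_mod4 hNodd hsq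
  rw [Nat.modEq_zero_iff_dvd]
  exact (ZMod.natCast_eq_zero_iff _ _).1 hfin
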